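/- The least primitive root modulo 40487 equals 5, but 5 is not a primitive root modulo 40487², so the least primitive root modulo 40487² differs from the least primitive root modulo 40487. -/

import Mathlib

/-- `a` is a primitive root modulo `n`: the multiplicative order of `a` mod `n`
equals `φ(n)`, i.e. `a` generates `(ℤ/nℤ)ˣ`. -/
def IsPrimitiveRootMod (a n : ℕ) : Prop :=
  orderOf (a : ZMod n) = Nat.totient n

/-- `a` is the least positive primitive root modulo `n`. -/
def IsLeastPrimitiveRootMod (a n : ℕ) : Prop :=
  0 < a ∧ IsPrimitiveRootMod a n ∧ ∀ b : ℕ, 0 < b → b < a → ¬ IsPrimitiveRootMod b n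

private lemma pow_cast_eq (a n k r : ℕ) (h : a ^ k % n = r) :
    (a : ZMod n) ^ k = (r : ZMod n) := by
  rw [← h, ← Nat.cast_pow, ZMod.natCast_mod]

private lemma pow_cast_ne_one (a n k r : ℕ) (h : a ^ k % n = r) (hr : r ≠ 1)
    (hrn : r < n) (hn : 1 < n) : (a : ZMod n) ^ k ≠ 1 := by
  rw [pow_cast_eq a n k r h]
  intro hc
  have : NeZero n := ⟨by omega⟩
  have h1 : ((r : ZMod n)).val = (1 : ZMod n).val := by rw [hc]
  rw [ZMod.val_natCast_of_lt hrn, ZMod.val_one_eq_one_mod, Nat.mod_eq_of_lt hn] at h1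
  exact hr h1

private lemma hp : Nat.Prime 40487 := by norm_num

private lemma tot : Nat.totient 40487 = 40486 := by
  rw [Nat.totient_prime hp]

private lemma prim5 : orderOf ((5 : ℕ) : ZMod 40487) = 40486 := by
  apply orderOf_eq_of_pow_and_pow_div_prime (by norm_num)
  · rw [pow_cast_eq 5 40487 40486 1 (by decide +kernel)]; norm_num
  · intro q hq hdvd
    have hq3 : q = 2 ∨ q = 31 ∨ q = 653 := by
      have h2 : q ∣ 2 * (31 * 653) := hdvd
      rcases hq.dvd_mul.mp h2 with h | h
      · exact Or.inl ((Nat.prime_dvd_prime_iff_eq hq (by norm_num)).mp h)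
      · rcases hq.dvd_mul.mp h with h | h
        · exact Or.inr (Or.inl ((Nat.prime_dvd_prime_iff_eq hq (by norm_num)).mp h))
        · exact Or.inr (Or.inr ((Nat.prime_dvd_prime_iff_eq hq (by norm_num)).mp h))
    rcases hq3 with rfl | rfl | rfl
    · exact pow_cast_ne_one 5 40487 (40486 / 2) 40486 (by decide +kernel) (by norm_num)
        (by norm_num) (by norm_num)
    · exact pow_cast_ne_one 5 40487 (40486 / 31) 32940 (by decide +kernel) (by norm_num)
        (by norm_num) (by norm_num)
    · exact pow_cast_ne_one 5 40487 (40486 / 653) 4413 (by norm_num) (by norm_num)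
        (by norm_num) (by norm_num)

private lemma not_prim (b : ℕ) (hb : b ^ 20243 % 40487 = 1) :
    ¬ IsPrimitiveRootMod b 40487 := by
  unfold IsPrimitiveRootMod
  rw [tot]
  have h : orderOf ((b : ℕ) : ZMod 40487) ∣ 20243 :=
    orderOf_dvd_of_pow_eq_one (by rw [pow_cast_eq b 40487 20243 1 hb]; norm_num)
  intro hc
  rw [hc] at h
  exact absurd (Nat.le_of_dvd (by norm_num) h) (by norm_num)

theorem g_ne_h_at_40487 :
    IsLeastPrimitiveRootMod 5 40487 ∧ ¬ IsPrimitiveRootMod 5 (40487 ^ 2) ∧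
      ∀ h : ℕ, IsLeastPrimitiveRootMod h (40487 ^ 2) → h ≠ 5 := by
  have hnot5 : ¬ IsPrimitiveRootMod 5 (40487 ^ 2) := by
    unfold IsPrimitiveRootMod
    have htot : Nat.totient (40487 ^ 2) = 40487 * 40486 := by
      rw [Nat.totient_prime_pow hp (by norm_num)]; norm_num
    rw [htot]
    have h : orderOf ((5 : ℕ) : ZMod (40487 ^ 2)) ∣ 40486 :=
      orderOf_dvd_of_pow_eq_one
        (by rw [pow_cast_eq 5 (40487 ^ 2) 40486 1 (by decide +kernel)]; norm_num)
    intro hc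
    rw [hc] at h
    exact absurd (Nat.le_of_dvd (by norm_num) h) (by norm_num)
  refine ⟨⟨by norm_num, ?_, ?_⟩, hnot5, ?_⟩
  · unfold IsPrimitiveRootMod
    rw [tot]
    exact_mod_cast prim5
  · intro b hb1 hb5
    interval_cases b
    · intro hc
      unfold IsPrimitiveRootMod at hc
      rw [tot] at hc
      simp at hc
    · exact not_prim 2 (by decide +kernel)
    · exact not_prim 3 (by decide +kernel)
    · exact not_prim 4 (by decide +kernel)
  · rintro h ⟨-, hprim, -⟩ rfl
    exact hnot5 hprim
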